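/- Let h(n,k) be defined by the recurrence h(n,k) = h(n−1,k) + (n+k−4)·h(n−1,k−1) + (n−k−1)·h(n−1,k−2), with h(n,k)=0 for k<0 or k>n−2 and h(n,0)=1 for n ≥ 2. Then for all n ≥ 2 and 0 ≤ k ≤ n−2, h(n,k) equals the number of perfect matchings of [1,2n−4] with exactly k long pairs. -/

import Mathlib

/-- `M` is a perfect matching on `[1, 2n]`. -/
def IsMatching (n : ℕ) (M : Finset (Finset ℕ)) : Prop :=
  (∀ p ∈ M, p.card = 2) ∧ (M : Set (Finset ℕ)).PairwiseDisjoint id ∧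
    M.biUnion id = Finset.Icc 1 (2 * n)

/-- A pair is long if it is not of the form `{i, i+1}`. -/
def IsLong (p : Finset ℕ) : Prop := ∀ i : ℕ, p ≠ {i, i + 1}

/-- The number of perfect matchings of `[1,2n]` with exactly `k` long pairs. -/
noncomputable def matchCount (n : ℕ) (k : ℤ) : ℕ :=
  Nat.card {M : Finset (Finset ℕ) //
    IsMatching n M ∧ ({p : Finset ℕ | p ∈ M ∧ IsLong p}.ncard : ℤ) = k}

namespace Aux

lemma isLong_iff (p : Finset ℕ) : IsLong p ↔ ∀ i ∈ p, p ≠ {i, i+1} := by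
  constructor
  · intro h i _; exact h i
  · intro h i he
    exact h i (he ▸ Finset.mem_insert_self i {i+1}) he

instance : DecidablePred IsLong := fun p => decidable_of_iff' _ (isLong_iff p)

lemma pair_long_iff {a b : ℕ} (h : a < b) : IsLong {a, b} ↔ a + 1 ≠ b := by
  constructor
  · intro hl he; exact hl a (by rw [he])
  · intro hne i he
    have ha : a ∈ ({i, i+1} : Finset ℕ) := he ▸ by simp
    have hb : b ∈ ({i, i+1} : Finset ℕ) := he ▸ by simp
    simp only [Finset.mem_insert, Finset.mem_singleton] at ha hb
    omega

lemma isMatching_iff (n : ℕ) (M : Finset (Finset ℕ)) : IsMatching n M ↔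
    (∀ p ∈ M, p.card = 2) ∧ (∀ p ∈ M, ∀ q ∈ M, p ≠ q → Disjoint p q) ∧
      M.biUnion id = Finset.Icc 1 (2 * n) := by
  unfold IsMatching Set.PairwiseDisjoint Set.Pairwise
  simp [Function.onFun]

instance (n : ℕ) : DecidablePred (IsMatching n) := fun M =>
  decidable_of_iff' _ (isMatching_iff n M)

def MS (n : ℕ) : Finset (Finset (Finset ℕ)) :=
  ((Finset.Icc 1 (2*n)).powerset.powerset).filter (IsMatching n)

lemma mem_MS {n : ℕ} {M : Finset (Finset ℕ)} : M ∈ MS n ↔ IsMatching n M := by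
  rw [MS, Finset.mem_filter, and_iff_right_iff_imp]
  intro hM
  simp only [Finset.mem_powerset]
  intro p hp
  simp only [Finset.mem_powerset]
  calc p ⊆ M.biUnion id := Finset.subset_biUnion_of_mem id hp
    _ = Finset.Icc 1 (2*n) := hM.2.2

def LC (M : Finset (Finset ℕ)) : ℕ := (M.filter IsLong).card

lemma matchCount_eq (m : ℕ) (k : ℕ) :
    matchCount m k = ((MS m).filter (fun M => LC M = k)).card := by
  have h1 : ∀ M : Finset (Finset ℕ),
      {p : Finset ℕ | p ∈ M ∧ IsLong p}.ncard = LC M := by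
    intro M
    have : {p : Finset ℕ | p ∈ M ∧ IsLong p} = ↑(M.filter IsLong) := by
      ext p; simp [Finset.mem_filter]
    rw [this, Set.ncard_coe_finset, LC]
  have h2 : ∀ M : Finset (Finset ℕ),
      (IsMatching m M ∧ ({p : Finset ℕ | p ∈ M ∧ IsLong p}.ncard : ℤ) = (k:ℤ)) ↔
        M ∈ (MS m).filter (fun M => LC M = k) := by
    intro M
    rw [Finset.mem_filter, mem_MS, h1]
    constructor
    · rintro ⟨h, hk⟩; exact ⟨h, by exact_mod_cast hk⟩
    · rintro ⟨h, hk⟩; exact ⟨h, by exact_mod_cast hk⟩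
  rw [matchCount]
  rw [Nat.card_congr (Equiv.subtypeEquivRight h2)]
  have : {M : Finset (Finset ℕ) // M ∈ (MS m).filter (fun M => LC M = k)} ≃
      ((((MS m).filter (fun M => LC M = k)) : Set (Finset (Finset ℕ)))) :=
    Equiv.subtypeEquivRight (by intro M; simp)
  rw [Nat.card_congr this, Nat.card_coe_set_eq, Set.ncard_coe_finset]

lemma matchCount_neg (m : ℕ) (k : ℤ) (hk : k < 0) : matchCount m k = 0 := by
  rw [matchCount, Nat.card_eq_zero]
  left
  constructor
  rintro ⟨M, _, hM⟩
  omega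


lemma match_disj {m : ℕ} {M : Finset (Finset ℕ)} (hM : IsMatching m M) :
    ∀ p ∈ M, ∀ q ∈ M, p ≠ q → Disjoint p q := ((isMatching_iff m M).1 hM).2.1

lemma pair_subset {m : ℕ} {M : Finset (Finset ℕ)} (hM : IsMatching m M) {p : Finset ℕ}
    (hp : p ∈ M) : p ⊆ Finset.Icc 1 (2*m) := by
  calc p ⊆ M.biUnion id := Finset.subset_biUnion_of_mem id hp
    _ = Finset.Icc 1 (2*m) := hM.2.2

lemma card_match {m : ℕ} {M : Finset (Finset ℕ)} (hM : IsMatching m M) : M.card = m := by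
  have h1 : (M.biUnion id).card = ∑ p ∈ M, p.card :=
    Finset.card_biUnion (fun p hp q hq hne => match_disj hM p hp q hq hne)
  have h2 : ∑ p ∈ M, p.card = 2 * M.card := by
    rw [Finset.sum_congr rfl hM.1, Finset.sum_const, smul_eq_mul, mul_comm]
  rw [hM.2.2] at h1
  simp [Nat.card_Icc] at h1
  omega

lemma LC_le {m : ℕ} {M : Finset (Finset ℕ)} (hM : IsMatching m M) : LC M ≤ m := by
  calc LC M ≤ M.card := Finset.card_filter_le _ _
    _ = m := card_match hM

lemma exists_pair {m : ℕ} {M : Finset (Finset ℕ)} (hM : IsMatching m M) {x : ℕ}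
    (hx : x ∈ Finset.Icc 1 (2*m)) : ∃ p ∈ M, x ∈ p := by
  rw [← hM.2.2] at hx
  simpa using hx

/-! ### shift maps -/

def sh (j x : ℕ) : ℕ := if j ≤ x then x + 1 else x
def unsh (j x : ℕ) : ℕ := if j < x then x - 1 else x

lemma sh_strictMono (j : ℕ) : StrictMono (sh j) := by
  intro x y h; unfold sh; split <;> split <;> omega

lemma sh_inj (j : ℕ) : Function.Injective (sh j) := (sh_strictMono j).injective

lemma unsh_sh (j x : ℕ) : unsh j (sh j x) = x := by
  unfold sh unsh; split_ifs <;> omega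

lemma sh_unsh {j x : ℕ} (hx : x ≠ j) : sh j (unsh j x) = x := by
  unfold sh unsh; split_ifs <;> omega

lemma sh_ne (j x : ℕ) : sh j x ≠ j := by unfold sh; split <;> omega

def shp (j : ℕ) (p : Finset ℕ) : Finset ℕ := p.image (sh j)

lemma shp_inj (j : ℕ) : Function.Injective (shp j) :=
  Finset.image_injective (sh_inj j)

def Phi (m j : ℕ) (M : Finset (Finset ℕ)) : Finset (Finset ℕ) :=
  insert ({j, 2*m+2} : Finset ℕ) (M.image (shp j))


lemma sh_image_Icc {m j : ℕ} (hj1 : 1 ≤ j) (hj2 : j ≤ 2*m+1) :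
    (Finset.Icc 1 (2*m)).image (sh j) = (Finset.Icc 1 (2*m+1)).erase j := by
  ext x
  simp only [Finset.mem_image, Finset.mem_Icc, Finset.mem_erase]
  constructor
  · rintro ⟨y, hy, rfl⟩
    refine ⟨sh_ne j y, ?_⟩
    unfold sh; split <;> omega
  · rintro ⟨hxj, hx1, hx2⟩
    refine ⟨unsh j x, ?_, sh_unsh hxj⟩
    unfold unsh; split <;> omega

lemma biUnion_image (f : ℕ → ℕ) (M : Finset (Finset ℕ)) :
    (M.image (fun p => p.image f)).biUnion id = (M.biUnion id).image f := by
  ext x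
  simp only [Finset.mem_biUnion, Finset.mem_image, id]
  constructor
  · rintro ⟨p', ⟨p, hp, rfl⟩, hx⟩
    simp only [Finset.mem_image] at hx
    obtain ⟨y, hy, rfl⟩ := hx
    exact ⟨y, ⟨p, hp, hy⟩, rfl⟩
  · rintro ⟨y, ⟨p, hp, hy⟩, rfl⟩
    exact ⟨p.image f, ⟨p, hp, rfl⟩, Finset.mem_image_of_mem _ hy⟩

lemma biUnion_image_shp (j : ℕ) (M : Finset (Finset ℕ)) :
    (M.image (shp j)).biUnion id = (M.biUnion id).image (sh j) :=
  biUnion_image (sh j) M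

lemma mem_shp_le {m j : ℕ} {M : Finset (Finset ℕ)} (hM : IsMatching m M) {p : Finset ℕ}
    (hp : p ∈ M) {x : ℕ} (hx : x ∈ shp j p) : 1 ≤ x ∧ x ≤ 2*m+1 := by
  simp only [shp, Finset.mem_image] at hx
  obtain ⟨y, hy, rfl⟩ := hx
  have := pair_subset hM hp hy
  simp only [Finset.mem_Icc] at this
  unfold sh; split <;> omega

lemma head_notMem_image {m j : ℕ} {M : Finset (Finset ℕ)} (hM : IsMatching m M) :
    ({j, 2*m+2} : Finset ℕ) ∉ M.image (shp j) := by
  intro hmem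
  simp only [Finset.mem_image] at hmem
  obtain ⟨p, hp, heq⟩ := hmem
  have h2 : (2*m+2 : ℕ) ∈ shp j p := by rw [heq]; simp
  have := (mem_shp_le hM hp h2).2
  omega

lemma Phi_mem {m j : ℕ} {M : Finset (Finset ℕ)} (hM : IsMatching m M)
    (hj1 : 1 ≤ j) (hj2 : j ≤ 2*m+1) : IsMatching (m+1) (Phi m j M) := by
  rw [isMatching_iff]
  refine ⟨?_, ?_, ?_⟩
  · intro p hp
    rw [Phi, Finset.mem_insert] at hp
    rcases hp with rfl | hp
    · exact Finset.card_pair (by omega)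
    · simp only [Finset.mem_image] at hp
      obtain ⟨q, hq, rfl⟩ := hp
      rw [shp, Finset.card_image_of_injective _ (sh_inj j)]
      exact hM.1 q hq
  · have hd : ∀ p ∈ M, Disjoint ({j, 2*m+2} : Finset ℕ) (shp j p) := by
      intro p hp
      rw [Finset.disjoint_left]
      intro x hx hx'
      have h1 := mem_shp_le hM hp hx'
      simp only [Finset.mem_insert, Finset.mem_singleton] at hx
      rcases hx with h | h
      · simp only [shp, Finset.mem_image] at hx'
        obtain ⟨y, hy, he⟩ := hx'
        rw [h] at he
        exact sh_ne j y he
      · omega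
    intro p hp q hq hne
    rw [Phi, Finset.mem_insert] at hp hq
    rcases hp with rfl | hp <;> rcases hq with rfl | hq
    · exact absurd rfl hne
    · obtain ⟨q', hq', rfl⟩ := Finset.mem_image.1 hq
      exact hd q' hq'
    · obtain ⟨p', hp', rfl⟩ := Finset.mem_image.1 hp
      exact (hd p' hp').symm
    · obtain ⟨p', hp', rfl⟩ := Finset.mem_image.1 hp
      obtain ⟨q', hq', rfl⟩ := Finset.mem_image.1 hq
      have hpq : p' ≠ q' := fun h => hne (by rw [h])
      exact (Finset.disjoint_image (sh_inj j)).2 (match_disj hM p' hp' q' hq' hpq)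
  · rw [Phi, Finset.biUnion_insert, biUnion_image_shp, hM.2.2,
      sh_image_Icc hj1 hj2]
    ext x
    simp only [Finset.mem_union, Finset.mem_insert, Finset.mem_singleton, id,
      Finset.mem_erase, Finset.mem_Icc]
    omega


lemma card2 {p : Finset ℕ} (hp : p.card = 2) : ∃ a b, a < b ∧ p = {a, b} := by
  obtain ⟨a, b, hne, rfl⟩ := Finset.card_eq_two.1 hp
  rcases lt_or_gt_of_ne hne with h | h
  exacts [⟨a, b, h, rfl⟩, ⟨b, a, h, Finset.pair_comm a b⟩]

lemma pair_eq_pair_iff {a b c d : ℕ} (h1 : a < b) (h2 : c < d) :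
    ({a, b} : Finset ℕ) = {c, d} ↔ a = c ∧ b = d := by
  constructor
  · intro h
    have ha : a ∈ ({c, d} : Finset ℕ) := h ▸ by simp
    have hb : b ∈ ({c, d} : Finset ℕ) := h ▸ by simp
    have hc : c ∈ ({a, b} : Finset ℕ) := h ▸ by simp
    have hd : d ∈ ({a, b} : Finset ℕ) := h ▸ by simp
    simp only [Finset.mem_insert, Finset.mem_singleton] at ha hb hc hd
    omega
  · rintro ⟨rfl, rfl⟩; rfl

lemma shp_pair (j a b : ℕ) : shp j {a, b} = {sh j a, sh j b} := by
  simp [shp, Finset.image_insert]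

lemma long_shp_iff {j : ℕ} (hj1 : 1 ≤ j) {p : Finset ℕ} (hcard : p.card = 2) :
    IsLong (shp j p) ↔ (IsLong p ∨ p = {j - 1, j}) := by
  obtain ⟨a, b, hab, rfl⟩ := card2 hcard
  have hsh : sh j a < sh j b := sh_strictMono j hab
  have hj' : j - 1 < j := by omega
  rw [shp_pair, pair_long_iff hsh, pair_long_iff hab, pair_eq_pair_iff hab hj']
  clear hsh
  unfold sh
  split_ifs <;> omega

lemma notLong_pred {j : ℕ} (hj1 : 1 ≤ j) : ¬ IsLong ({j - 1, j} : Finset ℕ) := by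
  intro hl
  exact hl (j - 1) (by rw [show j - 1 + 1 = j by omega])

lemma LC_Phi {m j : ℕ} {M : Finset (Finset ℕ)} (hM : IsMatching m M)
    (hj1 : 1 ≤ j) (hj2 : j ≤ 2*m+1) :
    LC (Phi m j M) = LC M + ((if j = 2*m+1 then 0 else 1) +
      (if ({j - 1, j} : Finset ℕ) ∈ M then 1 else 0)) := by
  have hnm := head_notMem_image hM (j := j)
  have hhead : IsLong ({j, 2*m+2} : Finset ℕ) ↔ j ≠ 2*m+1 := by
    rw [pair_long_iff (show j < 2*m+2 by omega)]
    constructor <;> omega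
  have himg : ((M.image (shp j)).filter IsLong).card
      = (M.filter (fun p => IsLong (shp j p))).card := by
    rw [Finset.filter_image, Finset.card_image_of_injective _ (shp_inj j)]
  have hcongr : M.filter (fun p => IsLong (shp j p))
      = M.filter (fun p => IsLong p ∨ p = {j - 1, j}) := by
    apply Finset.filter_congr
    intro p hp
    exact (long_shp_iff hj1 (hM.1 p hp))
  have hsplit : (M.filter (fun p => IsLong p ∨ p = {j - 1, j})).card
      = LC M + (if ({j - 1, j} : Finset ℕ) ∈ M then 1 else 0) := by
    rw [Finset.filter_or, Finset.card_union_of_disjoint, Finset.filter_eq']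
    · split_ifs <;> simp [LC]
    · rw [Finset.disjoint_left]
      intro p hp hp'
      rw [Finset.mem_filter] at hp hp'
      exact notLong_pred hj1 (hp'.2 ▸ hp.2)
  have hLCins : LC (Phi m j M) = (if IsLong ({j, 2*m+2} : Finset ℕ) then 1 else 0)
      + ((M.image (shp j)).filter IsLong).card := by
    rw [LC, Phi, Finset.filter_insert]
    split_ifs with h
    · rw [Finset.card_insert_of_notMem (fun hc => hnm (Finset.mem_filter.1 hc).1)]
      omega
    · omega
  rw [hLCins, himg, hcongr, hsplit]
  by_cases hj : j = 2*m+1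
  · have h1 : ({j - 1, j} : Finset ℕ) ∉ M := by
      intro hmem
      have h2 : j ∈ ({j-1, j} : Finset ℕ) := by simp
      have h3 := pair_subset hM hmem h2
      simp only [Finset.mem_Icc] at h3
      omega
    have h0 : ¬ IsLong ({j, 2*m+2} : Finset ℕ) := by rw [hhead]; simp [hj]
    rw [if_neg h0, if_neg h1, if_pos hj]
    omega
  · have h0 : IsLong ({j, 2*m+2} : Finset ℕ) := hhead.2 hj
    rw [if_pos h0, if_neg hj]
    omega


lemma count_short {m : ℕ} {M : Finset (Finset ℕ)} (hM : IsMatching m M) :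
    ((Finset.Icc 1 (2*m+1)).filter (fun j => ({j-1, j} : Finset ℕ) ∈ M)).card
      = m - LC M := by
  have hsum : (M.filter IsLong).card + (M.filter (fun p => ¬ IsLong p)).card = M.card :=
    Finset.card_filter_add_card_filter_not (p := IsLong)
  have hneg : (M.filter (fun p => ¬ IsLong p)).card = m - LC M := by
    have := card_match hM
    rw [LC] at *
    omega
  rw [← hneg]
  apply Finset.card_bij (fun j _ => ({j-1, j} : Finset ℕ))
  · intro j hj
    rw [Finset.mem_filter] at hj ⊢
    obtain ⟨hj1, hj2⟩ := hj
    rw [Finset.mem_Icc] at hj1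
    exact ⟨hj2, notLong_pred hj1.1⟩
  · intro j hj j' hj' heq
    rw [Finset.mem_filter, Finset.mem_Icc] at hj hj'
    have h1 : j ∈ ({j'-1, j'} : Finset ℕ) := heq ▸ by simp
    have h2 : j' ∈ ({j-1, j} : Finset ℕ) := heq ▸ by simp
    simp only [Finset.mem_insert, Finset.mem_singleton] at h1 h2
    omega
  · intro p hp
    rw [Finset.mem_filter] at hp
    obtain ⟨hpM, hpl⟩ := hp
    rw [isLong_iff] at hpl
    push_neg at hpl
    obtain ⟨i, hip, hpe⟩ := hpl
    have hI := pair_subset hM hpM hip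
    rw [Finset.mem_Icc] at hI
    refine ⟨i + 1, ?_, ?_⟩
    · rw [Finset.mem_filter, Finset.mem_Icc]
      refine ⟨⟨by omega, by omega⟩, ?_⟩
      rw [show i + 1 - 1 = i by omega, ← hpe]
      exact hpM
    · rw [show i + 1 - 1 = i by omega, ← hpe]

/-- increment of the long-pair count upon insertion at `j` -/
def D (m j : ℕ) (M : Finset (Finset ℕ)) : ℕ :=
  (if j = 2*m+1 then 0 else 1) + (if ({j-1, j} : Finset ℕ) ∈ M then 1 else 0)

lemma card_bij_main (m k : ℕ) :
    (((Finset.Icc 1 (2*m+1)) ×ˢ MS m).filter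
        (fun x => LC x.2 + D m x.1 x.2 = k)).card
      = ((MS (m+1)).filter (fun M => LC M = k)).card := by
  apply Finset.card_bij (fun x _ => Phi m x.1 x.2)
  · rintro ⟨j, M⟩ hx
    rw [Finset.mem_filter, Finset.mem_product, Finset.mem_Icc, mem_MS] at hx
    obtain ⟨⟨⟨hj1, hj2⟩, hM⟩, hk⟩ := hx
    rw [Finset.mem_filter, mem_MS]
    exact ⟨Phi_mem hM hj1 hj2, by rw [LC_Phi hM hj1 hj2]; exact hk⟩
  · rintro ⟨j, M⟩ hx ⟨j', M'⟩ hx' heq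
    rw [Finset.mem_filter, Finset.mem_product, Finset.mem_Icc, mem_MS] at hx hx'
    obtain ⟨⟨⟨hj1, hj2⟩, hM⟩, -⟩ := hx
    obtain ⟨⟨⟨hj1', hj2'⟩, hM'⟩, -⟩ := hx'
    simp only [Phi] at heq
    have hhd : ({j, 2*m+2} : Finset ℕ) ∈ insert ({j', 2*m+2} : Finset ℕ)
        (M'.image (shp j')) := by
      rw [← heq]; exact Finset.mem_insert_self _ _
    rw [Finset.mem_insert] at hhd
    have hjj : j = j' := by
      rcases hhd with h | h
      · exact ((pair_eq_pair_iff (by omega) (by omega)).1 h).1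
      · exfalso
        simp only [Finset.mem_image] at h
        obtain ⟨p, hp, hpe⟩ := h
        have h2 : (2*m+2 : ℕ) ∈ shp j' p := by rw [hpe]; simp
        have := (mem_shp_le hM' hp h2).2
        omega
    subst hjj
    have hMM : M = M' := by
      apply Finset.image_injective (shp_inj j)
      have h1 := head_notMem_image hM (j := j)
      have h2 := head_notMem_image hM' (j := j)
      rw [← Finset.erase_insert h1, ← Finset.erase_insert h2, heq]
    rw [hMM]
  · intro Mbig hMbig
    rw [Finset.mem_filter, mem_MS] at hMbig
    obtain ⟨hmatch, hLCk⟩ := hMbig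
    have h2e : 2*(m+1) = 2*m+2 := by ring
    obtain ⟨p0, hp0M, hp0x⟩ := exists_pair hmatch (x := 2*m+2)
      (by rw [Finset.mem_Icc]; omega)
    obtain ⟨a, b, hab, hp0eq⟩ := card2 (hmatch.1 p0 hp0M)
    have hsub0 := pair_subset hmatch hp0M
    have hbnd : ∀ x ∈ p0, 1 ≤ x ∧ x ≤ 2*m+2 := by
      intro x hx
      have := hsub0 hx
      rw [Finset.mem_Icc] at this
      omega
    have hb2 : b = 2*m+2 := by
      rw [hp0eq] at hp0x
      simp only [Finset.mem_insert, Finset.mem_singleton] at hp0x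
      have ha' := hbnd a (hp0eq ▸ by simp)
      have hb' := hbnd b (hp0eq ▸ by simp)
      omega
    set j := a with hjdef
    have hj1 : 1 ≤ j := (hbnd a (hp0eq ▸ by simp [hjdef])).1
    have hj2 : j ≤ 2*m+1 := by
      have := (hbnd b (hp0eq ▸ by simp)).2
      omega
    have hp0 : p0 = {j, 2*m+2} := by rw [hp0eq, hb2]
    set M' := (Mbig.erase p0).image (fun p => p.image (unsh j)) with hM'def
    have hF1 : ∀ p ∈ Mbig.erase p0, j ∉ p ∧ (2*m+2) ∉ p := by
      intro p hp
      rw [Finset.mem_erase] at hp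
      have hdisj := match_disj hmatch p hp.2 p0 hp0M hp.1
      rw [Finset.disjoint_right] at hdisj
      constructor
      · intro hc; exact hdisj (by rw [hp0]; simp) hc
      · intro hc; exact hdisj (by rw [hp0]; simp) hc
    have hF2 : ∀ p ∈ Mbig.erase p0, shp j (p.image (unsh j)) = p := by
      intro p hp
      rw [shp, Finset.image_image]
      rw [show (sh j ∘ unsh j) = fun x => sh j (unsh j x) from rfl]
      rw [Finset.image_congr (g := id) ?_, Finset.image_id]
      intro x hx
      exact sh_unsh (fun hc => (hF1 p hp).1 (hc ▸ hx))
    have hF3 : M'.image (shp j) = Mbig.erase p0 := by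
      rw [hM'def, Finset.image_image]
      have : ∀ p ∈ Mbig.erase p0, (shp j ∘ fun p => p.image (unsh j)) p = id p := by
        intro p hp; exact hF2 p hp
      rw [Finset.image_congr this, Finset.image_id]
    have hbiU : ∀ x, x ∈ (Mbig.erase p0).biUnion id ↔
        (1 ≤ x ∧ x ≤ 2*m+2 ∧ x ≠ j ∧ x ≠ 2*m+2) := by
      intro x
      simp only [Finset.mem_biUnion, id]
      constructor
      · rintro ⟨q, hq, hx⟩
        have hq' := Finset.mem_of_mem_erase hq
        have := pair_subset hmatch hq' hx
        rw [Finset.mem_Icc, h2e] at this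
        have hj' := (hF1 q hq).1
        have h2' := (hF1 q hq).2
        exact ⟨this.1, this.2, fun hc => hj' (hc ▸ hx), fun hc => h2' (hc ▸ hx)⟩
      · rintro ⟨h1, h2, h3, h4⟩
        obtain ⟨q, hq, hx⟩ := exists_pair hmatch (x := x)
          (by rw [Finset.mem_Icc]; omega)
        refine ⟨q, Finset.mem_erase.2 ⟨?_, hq⟩, hx⟩
        intro hc
        rw [hc, hp0] at hx
        simp only [Finset.mem_insert, Finset.mem_singleton] at hx
        omega
    have hG1 : IsMatching m M' := by
      rw [isMatching_iff]
      refine ⟨?_, ?_, ?_⟩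
      · intro q hq
        rw [hM'def, Finset.mem_image] at hq
        obtain ⟨p, hp, rfl⟩ := hq
        rw [Finset.card_image_of_injOn, hmatch.1 p (Finset.mem_of_mem_erase hp)]
        intro x hx y hy hxy
        have hxj : x ≠ j := fun hc => (hF1 p hp).1 (hc ▸ hx)
        have hyj : y ≠ j := fun hc => (hF1 p hp).1 (hc ▸ hy)
        rw [← sh_unsh hxj, ← sh_unsh hyj, hxy]
      · intro q1 hq1 q2 hq2 hne
        rw [hM'def, Finset.mem_image] at hq1 hq2
        obtain ⟨p1, hp1, rfl⟩ := hq1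
        obtain ⟨p2, hp2, rfl⟩ := hq2
        have hp12 : p1 ≠ p2 := fun hc => hne (by rw [hc])
        have hd : Disjoint p1 p2 := match_disj hmatch p1 (Finset.mem_of_mem_erase hp1)
          p2 (Finset.mem_of_mem_erase hp2)
          (fun hc => hp12 hc)
        have := hd
        rw [← hF2 p1 hp1, ← hF2 p2 hp2] at this
        exact (Finset.disjoint_image (sh_inj j)).1 this
      · rw [hM'def, biUnion_image]
        ext x
        simp only [Finset.mem_image, Finset.mem_Icc]
        constructor
        · rintro ⟨y, hy, rfl⟩
          rw [hbiU] at hy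
          unfold unsh; split <;> omega
        · rintro ⟨h1, h2⟩
          refine ⟨sh j x, ?_, unsh_sh j x⟩
          rw [hbiU]
          refine ⟨?_, ?_, sh_ne j x, ?_⟩ <;> unfold sh <;> split <;> omega
    have hG2 : Phi m j M' = Mbig := by
      rw [Phi, hF3, ← hp0, Finset.insert_erase hp0M]
    refine ⟨(j, M'), ?_, hG2⟩
    rw [Finset.mem_filter, Finset.mem_product, Finset.mem_Icc, mem_MS]
    refine ⟨⟨⟨hj1, hj2⟩, hG1⟩, ?_⟩
    have := LC_Phi hG1 hj1 hj2
    rw [hG2] at this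
    rw [D, ← this, hLCk]


lemma hno {m : ℕ} {M : Finset (Finset ℕ)} (hM : IsMatching m M) (j : ℕ)
    (hmem : ({j-1, j} : Finset ℕ) ∈ M) : 1 ≤ j ∧ j ≤ 2*m := by
  have : j ∈ ({j-1, j} : Finset ℕ) := by simp
  have := pair_subset hM hmem this
  rwa [Finset.mem_Icc] at this

lemma D_le {m j : ℕ} {M : Finset (Finset ℕ)} : D m j M ≤ 2 := by
  unfold D; split_ifs <;> omega

lemma cardD0 {m : ℕ} {M : Finset (Finset ℕ)} (hM : IsMatching m M) :
    ((Finset.Icc 1 (2*m+1)).filter (fun j => D m j M = 0)).card = 1 := by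
  have : (Finset.Icc 1 (2*m+1)).filter (fun j => D m j M = 0)
      = (Finset.Icc 1 (2*m+1)).filter (fun j => j = 2*m+1) := by
    apply Finset.filter_congr
    intro j hj
    rw [Finset.mem_Icc] at hj
    unfold D
    by_cases h2 : ({j-1, j} : Finset ℕ) ∈ M
    · have := hno hM j h2
      rw [if_pos h2]
      split_ifs <;> constructor <;> intro h <;> first | omega | exact h.elim
    · rw [if_neg h2]
      split_ifs <;> constructor <;> intro h <;> first | omega | exact h.elim
  rw [this, Finset.filter_eq', if_pos (by rw [Finset.mem_Icc]; omega)]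
  rfl

lemma cardD2 {m : ℕ} {M : Finset (Finset ℕ)} (hM : IsMatching m M) :
    ((Finset.Icc 1 (2*m+1)).filter (fun j => D m j M = 2)).card = m - LC M := by
  have : (Finset.Icc 1 (2*m+1)).filter (fun j => D m j M = 2)
      = (Finset.Icc 1 (2*m+1)).filter (fun j => ({j-1, j} : Finset ℕ) ∈ M) := by
    apply Finset.filter_congr
    intro j hj
    rw [Finset.mem_Icc] at hj
    unfold D
    by_cases h2 : ({j-1, j} : Finset ℕ) ∈ M
    · have h3 := hno hM j h2
      rw [if_pos h2, if_neg (show ¬ j = 2*m+1 by omega)]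
      simp [h2]
    · rw [if_neg h2]
      split_ifs <;> simp [h2]
  rw [this, count_short hM]

lemma cardD1 {m : ℕ} {M : Finset (Finset ℕ)} (hM : IsMatching m M) :
    ((Finset.Icc 1 (2*m+1)).filter (fun j => D m j M = 1)).card = m + LC M := by
  have h3 : ((Finset.Icc 1 (2*m+1)).filter (fun j => D m j M = 0)).card
      + ((Finset.Icc 1 (2*m+1)).filter (fun j => D m j M = 1)).card
      + ((Finset.Icc 1 (2*m+1)).filter (fun j => D m j M = 2)).card = 2*m+1 := by
    rw [Finset.card_filter, Finset.card_filter, Finset.card_filter,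
      ← Finset.sum_add_distrib, ← Finset.sum_add_distrib]
    have hpt : ∀ j ∈ Finset.Icc 1 (2*m+1),
        ((if D m j M = 0 then 1 else 0) + (if D m j M = 1 then 1 else 0)
          + (if D m j M = 2 then 1 else 0)) = 1 := by
      intro j _
      have := D_le (m := m) (j := j) (M := M)
      split_ifs <;> omega
    rw [Finset.sum_congr rfl hpt, Finset.sum_const, smul_eq_mul, mul_one,
      Nat.card_Icc]
    omega
  rw [cardD0 hM, cardD2 hM] at h3
  have := LC_le hM
  omega

lemma inner_count {m k : ℕ} {M : Finset (Finset ℕ)} (hM : IsMatching m M) :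
    ((Finset.Icc 1 (2*m+1)).filter (fun j => LC M + D m j M = k)).card
      = (if LC M = k then 1 else 0) + (if LC M + 1 = k then m + LC M else 0)
        + (if LC M + 2 = k then m - LC M else 0) := by
  have hsplit : (Finset.Icc 1 (2*m+1)).filter (fun j => LC M + D m j M = k)
      = ((Finset.Icc 1 (2*m+1)).filter (fun j => D m j M = 0 ∧ LC M = k))
        ∪ ((Finset.Icc 1 (2*m+1)).filter (fun j => D m j M = 1 ∧ LC M + 1 = k))
        ∪ ((Finset.Icc 1 (2*m+1)).filter (fun j => D m j M = 2 ∧ LC M + 2 = k)) := by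
    rw [← Finset.filter_or, ← Finset.filter_or]
    apply Finset.filter_congr
    intro j _
    have := D_le (m := m) (j := j) (M := M)
    constructor
    · intro h; omega
    · intro h; omega
  rw [hsplit, Finset.card_union_of_disjoint, Finset.card_union_of_disjoint]
  · have e0 : ∀ (c : ℕ) (Q : Prop) [Decidable Q] (res : ℕ),
        ((Finset.Icc 1 (2*m+1)).filter (fun j => D m j M = c)).card = res →
        ((Finset.Icc 1 (2*m+1)).filter (fun j => D m j M = c ∧ Q)).card
          = if Q then res else 0 := by
      intro c Q _ res hres
      by_cases hQ : Q
      · rw [if_pos hQ, ← hres]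
        congr 1
        apply Finset.filter_congr
        intro j _
        simp [hQ]
      · rw [if_neg hQ]
        rw [Finset.card_eq_zero, Finset.filter_eq_empty_iff]
        intro j _ hc
        exact hQ hc.2
    rw [e0 0 _ 1 (cardD0 hM), e0 1 _ (m + LC M) (cardD1 hM),
      e0 2 _ (m - LC M) (cardD2 hM)]
  · rw [Finset.disjoint_left]
    intro j hj hj'
    simp only [Finset.mem_union, Finset.mem_filter] at hj hj'
    omega
  · rw [Finset.disjoint_left]
    intro j hj hj'
    simp only [Finset.mem_union, Finset.mem_filter] at hj hj'
    omega


def cnt (m k : ℕ) : ℕ := ((MS m).filter (fun M => LC M = k)).card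

lemma cnt_master (m k : ℕ) :
    cnt (m+1) k = ∑ M ∈ MS m, ((if LC M = k then 1 else 0)
      + (if LC M + 1 = k then m + LC M else 0)
      + (if LC M + 2 = k then m - LC M else 0)) := by
  rw [cnt, ← card_bij_main m k, Finset.card_filter, Finset.sum_product_right]
  apply Finset.sum_congr rfl
  intro M hMmem
  have hM := mem_MS.1 hMmem
  rw [← inner_count hM (k := k), Finset.card_filter]

lemma sum_ite_c (s : Finset (Finset (Finset ℕ))) (P : Finset (Finset ℕ) → Prop)
    [DecidablePred P] (c : ℕ) :
    ∑ M ∈ s, (if P M then c else 0) = c * (s.filter P).card := by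
  rw [← Finset.sum_filter, Finset.sum_const, smul_eq_mul, mul_comm]

lemma cnt_rec0 (m : ℕ) : cnt (m+1) 0 = cnt m 0 := by
  rw [cnt_master]
  have hpt : ∀ M ∈ MS m, ((if LC M = 0 then 1 else 0)
      + (if LC M + 1 = 0 then m + LC M else 0)
      + (if LC M + 2 = 0 then m - LC M else 0)) = (if LC M = 0 then 1 else 0) := by
    intro M _
    generalize LC M = l
    split_ifs <;> first | omega | exact False.elim ‹False›
  rw [Finset.sum_congr rfl hpt, sum_ite_c, one_mul, cnt]

lemma cnt_rec1 (m : ℕ) : cnt (m+1) 1 = cnt m 1 + m * cnt m 0 := by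
  rw [cnt_master]
  have hpt : ∀ M ∈ MS m, ((if LC M = 1 then 1 else 0)
      + (if LC M + 1 = 1 then m + LC M else 0)
      + (if LC M + 2 = 1 then m - LC M else 0))
      = (if LC M = 1 then 1 else 0) + (if LC M = 0 then m else 0) := by
    intro M _
    generalize LC M = l
    split_ifs <;> first | omega | exact False.elim ‹False›
  rw [Finset.sum_congr rfl hpt, Finset.sum_add_distrib, sum_ite_c, sum_ite_c,
    one_mul, cnt, cnt]

lemma cnt_rec2 (m k : ℕ) :
    cnt (m+1) (k+2) = cnt m (k+2) + (m+k+1) * cnt m (k+1) + (m-k) * cnt m k := by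
  rw [cnt_master]
  have hpt : ∀ M ∈ MS m, ((if LC M = k+2 then 1 else 0)
      + (if LC M + 1 = k+2 then m + LC M else 0)
      + (if LC M + 2 = k+2 then m - LC M else 0))
      = (if LC M = k+2 then 1 else 0) + (if LC M = k+1 then m+k+1 else 0)
        + (if LC M = k then m-k else 0) := by
    intro M _
    generalize LC M = l
    split_ifs <;> first | omega | exact False.elim ‹False›
  rw [Finset.sum_congr rfl hpt, Finset.sum_add_distrib, Finset.sum_add_distrib,
    sum_ite_c, sum_ite_c, sum_ite_c, one_mul, cnt, cnt, cnt]

lemma MS_zero : MS 0 = {∅} := by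
  ext M
  rw [mem_MS, Finset.mem_singleton]
  constructor
  · intro h
    by_contra hne
    obtain ⟨p, hp⟩ := Finset.nonempty_iff_ne_empty.2 hne
    have h2 := h.1 p hp
    have h3 := pair_subset h hp
    rw [show (2*0 : ℕ) = 0 from rfl, show Finset.Icc 1 0 = (∅ : Finset ℕ) from rfl] at h3
    rw [Finset.subset_empty.1 h3] at h2
    simp at h2
  · rintro rfl
    refine ⟨by simp, by simp, by simp⟩

lemma cnt_zero_zero : cnt 0 0 = 1 := by
  rw [cnt, MS_zero]
  rw [Finset.filter_singleton]
  rw [if_pos (by simp [LC])]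
  rfl

lemma mc_cnt (m k : ℕ) : matchCount m k = cnt m k := matchCount_eq m k

lemma mc_zero (m : ℕ) : matchCount m 0 = 1 := by
  rw [show ((0:ℤ)) = ((0:ℕ):ℤ) from rfl, mc_cnt]
  induction m with
  | zero => exact cnt_zero_zero
  | succ n ih => rw [cnt_rec0]; exact ih

lemma cnt_big (m k : ℕ) (hk : m < k) : cnt m k = 0 := by
  rw [cnt, Finset.card_eq_zero, Finset.filter_eq_empty_iff]
  intro M hMmem hLC
  have := LC_le (mem_MS.1 hMmem)
  omega

lemma mc_big (m : ℕ) (k : ℤ) (hk : (m:ℤ) < k) : matchCount m k = 0 := by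
  have hk0 : 0 ≤ k := by omega
  obtain ⟨k', rfl⟩ := Int.eq_ofNat_of_zero_le hk0
  rw [mc_cnt, cnt_big]
  omega


lemma mc_rec (m : ℕ) (k : ℤ) (hk1 : 1 ≤ k) (hk2 : k ≤ (m:ℤ) + 1) :
    (matchCount (m+1) k : ℤ) = (matchCount m k : ℤ)
      + ((m:ℤ) + k - 1) * (matchCount m (k-1) : ℤ)
      + ((m:ℤ) + 2 - k) * (matchCount m (k-2) : ℤ) := by
  rcases eq_or_lt_of_le hk1 with h1 | h1
  · rw [← h1]
    have e1 : matchCount (m+1) (1:ℤ) = cnt (m+1) 1 := by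
      rw [show (1:ℤ) = ((1:ℕ):ℤ) by norm_num]; exact mc_cnt _ _
    have e2 : matchCount m (1:ℤ) = cnt m 1 := by
      rw [show (1:ℤ) = ((1:ℕ):ℤ) by norm_num]; exact mc_cnt _ _
    have e3 : matchCount m ((1:ℤ)-1) = cnt m 0 := by
      rw [show (1:ℤ)-1 = ((0:ℕ):ℤ) by norm_num]; exact mc_cnt _ _
    have e4 : matchCount m ((1:ℤ)-2) = 0 := matchCount_neg m _ (by norm_num)
    rw [e1, e2, e3, e4, cnt_rec1]
    push_cast
    ring
  · have hk2' : 2 ≤ k := h1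
    set k' := (k-2).toNat with hk'def
    have hkk : k = (k':ℤ) + 2 := by rw [hk'def]; omega
    have hk'm : k' ≤ m := by omega
    have e1 : matchCount (m+1) k = cnt (m+1) (k'+2) := by
      rw [show k = ((k'+2:ℕ):ℤ) by push_cast; omega]; exact mc_cnt _ _
    have e2 : matchCount m k = cnt m (k'+2) := by
      rw [show k = ((k'+2:ℕ):ℤ) by push_cast; omega]; exact mc_cnt _ _
    have e3 : matchCount m (k-1) = cnt m (k'+1) := by
      rw [show k-1 = ((k'+1:ℕ):ℤ) by push_cast; omega]; exact mc_cnt _ _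
    have e4 : matchCount m (k-2) = cnt m k' := by
      rw [show k-2 = ((k':ℕ):ℤ) by omega]; exact mc_cnt _ _
    rw [e1, e2, e3, e4, cnt_rec2, hkk]
    push_cast [Nat.cast_sub hk'm]
    ring

end Aux

theorem stmt15 (h : ℕ → ℤ → ℤ)
    (hout : ∀ (n : ℕ) (k : ℤ), k < 0 ∨ (n : ℤ) - 2 < k → h n k = 0)
    (hbase : ∀ n : ℕ, 2 ≤ n → h n 0 = 1)
    (hrec : ∀ n : ℕ, 3 ≤ n → ∀ k : ℤ, 0 < k → k ≤ (n : ℤ) - 2 →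
      h n k = h (n - 1) k + ((n : ℤ) + k - 4) * h (n - 1) (k - 1)
        + ((n : ℤ) - k - 1) * h (n - 1) (k - 2)) :
    ∀ n : ℕ, 2 ≤ n → ∀ k : ℤ, 0 ≤ k → k ≤ (n : ℤ) - 2 →
      h n k = (matchCount (n - 2) k : ℤ) := by
  intro n hn
  induction n, hn using Nat.le_induction with
  | base =>
    intro k hk0 hk2
    have hk : k = 0 := by norm_num at hk2; omega
    subst hk
    rw [hbase 2 le_rfl, show (2-2 : ℕ) = 0 from rfl, Aux.mc_zero]
    norm_num
  | succ n hn ih =>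
    intro k hk0 hk2
    have hn2 : (2:ℕ) ≤ n := hn
    set m := n - 2 with hm
    have hmn : n = m + 2 := by omega
    have hcast : ((n:ℤ)) = (m:ℤ) + 2 := by rw [hmn]; push_cast; ring
    have hk2' : k ≤ (m:ℤ) + 1 := by push_cast at hk2; omega
    have H' : ∀ j : ℤ, j ≤ (n:ℤ) - 1 → h n j = (matchCount m j : ℤ) := by
      intro j hj
      by_cases hj0 : 0 ≤ j
      · rcases le_or_gt j ((n:ℤ) - 2) with hj2 | hj2
        · exact ih j hj0 hj2
        · rw [hout n j (Or.inr hj2), Aux.mc_big m j (by omega)]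
          norm_num
      · rw [hout n j (Or.inl (by omega)), Aux.matchCount_neg m j (by omega)]
        norm_num
    by_cases hk : k = 0
    · subst hk
      rw [hbase (n+1) (by omega), show (n+1-2 : ℕ) = m+1 by omega, Aux.mc_zero]
      norm_num
    · have hk1 : 1 ≤ k := by omega
      rw [hrec (n+1) (by omega) k (by omega) (by push_cast; omega)]
      rw [show (n+1-1 : ℕ) = n from rfl]
      rw [H' k (by omega), H' (k-1) (by omega), H' (k-2) (by omega)]
      rw [show (n+1-2 : ℕ) = m+1 by omega]
      rw [Aux.mc_rec m k hk1 hk2']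
      rw [show ((n+1:ℕ):ℤ) = (m:ℤ)+3 by push_cast [hmn]; ring]
      ring
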